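/- Let n ≥ 2, ℓ ≥ 1, let v₁,…,vₙ : Fin ℓ → ℝ be nonzero binary vectors, and let t ∈ [0,1], β > 0, δ > 0. Write c(i,j) = ⟨vᵢ, vⱼ⟩/(‖vᵢ‖·‖vⱼ‖) for the cosine similarity, and for each i define Aᵢ = (∑_{j ≠ i} exp(−β·(c(i,j)+1)) · (∑_t vⱼ t)) / (∑_{k ≠ i} exp(−β·(c(i,k)+1)) + exp(−β·(t+1))). Then: (a) if there exist i ≠ j with c(i,j) ≤ t, there exists i with Aᵢ ≥ 1/n; and (b) if c(i,j) ≥ t + δ for all i ≠ j, then Aᵢ ≤ ℓ · n · exp(−β·δ) for every i. -/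
import Mathlib


open Finset

/-- The Euclidean norm of a vector indexed by a finite type. -/
noncomputable def euclNorm {ι : Type*} [Fintype ι] (v : ι → ℝ) : ℝ :=
  Real.sqrt (∑ t, (v t) ^ 2)

/-- The yes/no gap of the attention entries in the construction showing a single
attention unit with input and output MLPs solves `LSD_{n,ℓ,t}`. -/
theorem stmt11 (n ℓ : ℕ) (hn : 2 ≤ n) (hℓ : 1 ≤ ℓ)
    (v : Fin n → Fin ℓ → ℝ)
    (hbin : ∀ i s, v i s = 0 ∨ v i s = 1)
    (hnz : ∀ i, v i ≠ 0)
    (t β δ : ℝ) (ht0 : 0 ≤ t) (ht1 : t ≤ 1) (hβ : 0 < β) (hδ : 0 < δ)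
    (c : Fin n → Fin n → ℝ)
    (hc : ∀ i j, c i j = (∑ s, v i s * v j s) / (euclNorm (v i) * euclNorm (v j)))
    (A : Fin n → ℝ)
    (hA : ∀ i, A i =
      (∑ j ∈ Finset.univ.erase i, Real.exp (-(β * (c i j + 1))) * (∑ s, v j s)) /
        ((∑ k ∈ Finset.univ.erase i, Real.exp (-(β * (c i k + 1)))) +
          Real.exp (-(β * (t + 1))))) :
    ((∃ i j : Fin n, i ≠ j ∧ c i j ≤ t) → ∃ i, 1 / (n : ℝ) ≤ A i) ∧
    ((∀ i j : Fin n, i ≠ j → t + δ ≤ c i j) →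
      ∀ i, A i ≤ (ℓ : ℝ) * n * Real.exp (-(β * δ))) := by
  have hn' : (2:ℝ) ≤ (n:ℝ) := by exact_mod_cast hn
  have hsum1 : ∀ j, (1:ℝ) ≤ ∑ s, v j s := by
    intro j
    obtain ⟨s, hs⟩ := Function.ne_iff.mp (hnz j)
    have hv1 : v j s = 1 := (hbin j s).resolve_left hs
    calc (1:ℝ) = v j s := hv1.symm
      _ ≤ ∑ s, v j s := Finset.single_le_sum
          (fun s _ => by rcases hbin j s with h | h <;> simp [h]) (mem_univ s)
  have hsumℓ : ∀ j, (∑ s, v j s) ≤ (ℓ:ℝ) := by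
    intro j
    calc ∑ s, v j s ≤ ∑ _s : Fin ℓ, (1:ℝ) :=
          Finset.sum_le_sum (fun s _ => by rcases hbin j s with h | h <;> simp [h])
      _ = (ℓ:ℝ) := by simp
  constructor
  · rintro ⟨i, j, hij, hle⟩
    refine ⟨i, ?_⟩
    rw [hA i]
    set N := ∑ j ∈ univ.erase i, Real.exp (-(β * (c i j + 1))) * (∑ s, v j s) with hN
    set S := ∑ k ∈ univ.erase i, Real.exp (-(β * (c i k + 1))) with hS
    set E := Real.exp (-(β * (t + 1))) with hE
    have hSN : S ≤ N := Finset.sum_le_sum (fun k _ => by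
      nth_rewrite 1 [← mul_one (Real.exp (-(β * (c i k + 1))))]
      exact mul_le_mul_of_nonneg_left (hsum1 k) (Real.exp_pos _).le)
    have hEN : E ≤ N := by
      have h1 : E ≤ Real.exp (-(β * (c i j + 1))) * (∑ s, v j s) := by
        calc E ≤ Real.exp (-(β * (c i j + 1))) := Real.exp_le_exp.mpr (by nlinarith)
          _ = Real.exp (-(β * (c i j + 1))) * 1 := (mul_one _).symm
          _ ≤ _ := mul_le_mul_of_nonneg_left (hsum1 j) (Real.exp_pos _).le
      refine h1.trans (Finset.single_le_sum
        (f := fun k => Real.exp (-(β * (c i k + 1))) * (∑ s, v k s)) (fun k _ => ?_)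
        (Finset.mem_erase.mpr ⟨hij.symm, mem_univ j⟩))
      exact mul_nonneg (Real.exp_pos _).le (le_trans zero_le_one (hsum1 k))
    have hEpos : 0 < E := Real.exp_pos _
    have hNpos : 0 < N := hEpos.trans_le hEN
    have hDpos : 0 < S + E := by positivity
    rw [div_le_div_iff₀ (by linarith) hDpos]
    nlinarith
  · intro hall i
    rw [hA i]
    set N := ∑ j ∈ univ.erase i, Real.exp (-(β * (c i j + 1))) * (∑ s, v j s) with hN
    set S := ∑ k ∈ univ.erase i, Real.exp (-(β * (c i k + 1))) with hS
    set E := Real.exp (-(β * (t + 1))) with hE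
    have hS0 : 0 ≤ S := Finset.sum_nonneg (fun k _ => (Real.exp_pos _).le)
    have hEpos : 0 < E := Real.exp_pos _
    have hDpos : 0 < S + E := by positivity
    have hNle : N ≤ (n:ℝ) * (ℓ:ℝ) * Real.exp (-(β * (t + δ + 1))) := by
      have hterm : ∀ k ∈ univ.erase i,
          Real.exp (-(β * (c i k + 1))) * (∑ s, v k s)
            ≤ Real.exp (-(β * (t + δ + 1))) * (ℓ:ℝ) := by
        intro k hk
        have hki : k ≠ i := (Finset.mem_erase.mp hk).1
        have hck : t + δ ≤ c i k := hall i k (Ne.symm hki)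
        have h1 : Real.exp (-(β * (c i k + 1))) ≤ Real.exp (-(β * (t + δ + 1))) :=
          Real.exp_le_exp.mpr (by nlinarith)
        exact mul_le_mul h1 (hsumℓ k) (le_trans zero_le_one (hsum1 k)) (Real.exp_pos _).le
      calc N ≤ ∑ _k ∈ univ.erase i, Real.exp (-(β * (t + δ + 1))) * (ℓ:ℝ) :=
            Finset.sum_le_sum hterm
        _ = ((univ.erase i).card : ℝ) * (Real.exp (-(β * (t + δ + 1))) * (ℓ:ℝ)) := by
            rw [Finset.sum_const, nsmul_eq_mul]
        _ ≤ (n:ℝ) * (Real.exp (-(β * (t + δ + 1))) * (ℓ:ℝ)) := by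
            refine mul_le_mul_of_nonneg_right ?_ (by positivity)
            have : (univ.erase i).card ≤ n := by
              simpa using (Finset.card_erase_le.trans (by simp))
            exact_mod_cast this
        _ = (n:ℝ) * (ℓ:ℝ) * Real.exp (-(β * (t + δ + 1))) := by ring
    have hEE : Real.exp (-(β * δ)) * E = Real.exp (-(β * (t + δ + 1))) := by
      rw [hE, ← Real.exp_add]; ring_nf
    rw [div_le_iff₀ hDpos]
    have hM0 : 0 ≤ (ℓ:ℝ) * (n:ℝ) * Real.exp (-(β * δ)) := by positivity
    have hNle' : N ≤ (n:ℝ) * (ℓ:ℝ) * (Real.exp (-(β * δ)) * E) := by rw [hEE]; exact hNle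
    nlinarith [mul_le_mul_of_nonneg_left hS0 hM0]
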